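/- Let r ≥ 1 and let E₁, E₂ be elements of IR(r,F₂) such that E₁ ∩ E₂ is linearly independent over F₂. Set d = |E₁ \ E₂| + |E₂ \ E₁|. Then there exists a sequence γ₀, γ₁, …, γ_d of elements of IR(r,F₂) with γ₀ = E₁, γ_d = E₂, and such that for each i = 1, …, d the symmetric difference of γ_{i−1} and γ_i consists of exactly one element (a regular geodesic from E₁ to E₂ exists). -/

import Mathlib

open CategoryTheory

/-- A subset `E` of `𝔽₂^r` not containing `0` is *regular-spanning* if it spans `𝔽₂^r` and
the binary matroid of linear dependence on `E` is regular of rank `r`, expressed concretely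
by the existence of `ρ : E → ℚ^r` realizing the same independent sets, under which every
`r`-element `𝔽₂`-basis contained in `E` is sent to a matrix of determinant `±1`. -/
def RegularSpanning (r : ℕ) (E : Set (Fin r → ZMod 2)) : Prop :=
  0 ∉ E ∧ Submodule.span (ZMod 2) E = ⊤ ∧
    ∃ ρ : (Fin r → ZMod 2) → (Fin r → ℚ),
      (∀ S ⊆ E,
        (LinearIndependent (ZMod 2) ((↑) : S → (Fin r → ZMod 2)) ↔
          Set.InjOn ρ S ∧ LinearIndependent ℚ ((↑) : (ρ '' S) → (Fin r → ℚ)))) ∧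
      ∀ g : Fin r → (Fin r → ZMod 2), (∀ i, g i ∈ E) →
        LinearIndependent (ZMod 2) g →
          (Matrix.of fun i j => ρ (g j) i).det = 1 ∨
          (Matrix.of fun i j => ρ (g j) i).det = -1

section AuxGeodesic
open Set Submodule

theorem LinearIndependent.to_subtype_range {ι K M : Type*} [DivisionRing K] [AddCommGroup M]
    [Module K M] {f : ι → M} (hf : LinearIndependent K f) :
    LinearIndependent K ((↑) : Set.range f → M) := hf.linearIndepOn_id

theorem LinearIndependent.mono {K M : Type*} [DivisionRing K] [AddCommGroup M] [Module K M]
    {t s : Set M} (hs : LinearIndependent K ((↑) : s → M)) (h : t ⊆ s) :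
    LinearIndependent K ((↑) : t → M) := LinearIndepOn.mono (v := id) hs h

theorem linearIndependent_insert {K M : Type*} [DivisionRing K] [AddCommGroup M] [Module K M]
    {s : Set M} {x : M} (hxs : x ∉ s) :
    LinearIndependent K ((↑) : ↥(insert x s) → M) ↔
      LinearIndependent K ((↑) : s → M) ∧ x ∉ span K s := linearIndepOn_id_insert hxs

theorem LinearIndependent.insert {K M : Type*} [DivisionRing K] [AddCommGroup M] [Module K M]
    {s : Set M} {x : M} (hs : LinearIndependent K ((↑) : s → M)) (hx : x ∉ span K s) :
    LinearIndependent K ((↑) : ↥(insert x s) → M) := LinearIndepOn.id_insert hs hx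

noncomputable def LinearIndependent.extend {K M : Type*} [DivisionRing K] [AddCommGroup M]
    [Module K M] {s t : Set M} (hs : LinearIndependent K ((↑) : s → M)) (hst : s ⊆ t) : Set M :=
  LinearIndepOn.extend (v := id) hs hst

theorem LinearIndependent.extend_subset {K M : Type*} [DivisionRing K] [AddCommGroup M]
    [Module K M] {s t : Set M} (hs : LinearIndependent K ((↑) : s → M)) (hst : s ⊆ t) :
    hs.extend hst ⊆ t := LinearIndepOn.extend_subset (v := id) hs hst

theorem LinearIndependent.subset_extend {K M : Type*} [DivisionRing K] [AddCommGroup M]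
    [Module K M] {s t : Set M} (hs : LinearIndependent K ((↑) : s → M)) (hst : s ⊆ t) :
    s ⊆ hs.extend hst := LinearIndepOn.subset_extend (v := id) hs hst

theorem LinearIndependent.subset_span_extend {K M : Type*} [DivisionRing K] [AddCommGroup M]
    [Module K M] {s t : Set M} (hs : LinearIndependent K ((↑) : s → M)) (hst : s ⊆ t) :
    t ⊆ span K (hs.extend hst) := LinearIndepOn.subset_span_extend (K := K) hs hst

theorem LinearIndependent.linearIndependent_extend {K M : Type*} [DivisionRing K]
    [AddCommGroup M] [Module K M] {s t : Set M} (hs : LinearIndependent K ((↑) : s → M))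
    (hst : s ⊆ t) : LinearIndependent K ((↑) : ↥(hs.extend hst) → M) :=
  LinearIndepOn.linearIndepOn_extend (v := id) hs hst

lemma regularSpanning_mono {r : ℕ} {E E' : Set (Fin r → ZMod 2)}
    (hE : RegularSpanning r E) (hsub : E' ⊆ E)
    (hspan : Submodule.span (ZMod 2) E' = ⊤) : RegularSpanning r E' := by
  obtain ⟨h0, -, ρ, hiff, hdet⟩ := hE
  exact ⟨fun h => h0 (hsub h), hspan, ρ, fun S hS => hiff S (hS.trans hsub),
    fun g hg => hdet g (fun i => hsub (hg i))⟩

lemma zmod2_ne_zero {a : ZMod 2} (h : a ≠ 0) : a = 1 := by revert h; revert a; decide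

lemma regularSpanning_insert_basis {r : ℕ} (b : Module.Basis (Fin r) (ZMod 2) (Fin r → ZMod 2))
    (x : Fin r → ZMod 2) (hx : x ≠ 0) :
    RegularSpanning r (insert x (Set.range ⇑b)) := by
  classical
  haveI : Nonempty (Fin r) := by
    by_contra h
    exact hx (funext fun i => absurd ⟨i⟩ h)
  set ρ : (Fin r → ZMod 2) → (Fin r → ℚ) := fun w i => ((b.repr w i).val : ℚ) with hρ
  have h1v : (1 : ZMod 2).val = 1 := rfl
  have h0v : (0 : ZMod 2).val = 0 := rfl
  -- basic facts
  have hρinj : Function.Injective ρ := by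
    intro w w' h
    apply b.repr.injective
    ext i
    have := congrFun h i
    exact ZMod.val_injective 2 (Nat.cast_injective this)
  have hρb : ∀ k i, ρ (b k) i = if i = k then (1:ℚ) else 0 := by
    intro k i
    simp only [hρ, Module.Basis.repr_self, Finsupp.single_apply]
    by_cases h : i = k
    · simp [h, h1v]
    · simp [h, Ne.symm h, h0v]
  have hρb' : ∀ k, ρ (b k) = (Pi.basisFun ℚ (Fin r)) k := by
    intro k
    funext i
    rw [hρb, Pi.basisFun_apply, Pi.single_apply]
  have hρ0 : ∀ w i, ρ w i = 0 ↔ b.repr w i = 0 := by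
    intro w i
    simp only [hρ, Nat.cast_eq_zero, ZMod.val_eq_zero]
  -- span membership criteria
  have hmem2 : ∀ (w : Fin r → ZMod 2) (T : Set (Fin r)),
      w ∈ span (ZMod 2) (⇑b '' T) ↔ ∀ i, b.repr w i ≠ 0 → i ∈ T := by
    intro w T
    rw [Module.Basis.mem_span_image]
    simp [Set.subset_def, Finsupp.mem_support_iff]
  have hmemQ : ∀ (y : Fin r → ℚ) (T : Set (Fin r)),
      y ∈ span ℚ (⇑(Pi.basisFun ℚ (Fin r)) '' T) ↔ ∀ i, y i ≠ 0 → i ∈ T := by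
    intro y T
    rw [Module.Basis.mem_span_image]
    simp [Set.subset_def, Finsupp.mem_support_iff]
  refine ⟨?_, ?_, ρ, ?_, ?_⟩
  · rintro (h | ⟨i, hi⟩)
    · exact hx h.symm
    · exact b.ne_zero i hi
  · rw [eq_top_iff, ← b.span_eq]
    exact span_mono (subset_insert _ _)
  · -- the independence transfer
    intro S hS
    have main : LinearIndependent (ZMod 2) ((↑) : S → (Fin r → ZMod 2)) ↔
        LinearIndependent ℚ ((↑) : (ρ '' S) → (Fin r → ℚ)) := by
      by_cases hxS : x ∈ S ∧ x ∉ Set.range ⇑b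
      · -- S contains x, x not in range b
        obtain ⟨hxS, hxb⟩ := hxS
        have hS0 : S \ {x} ⊆ Set.range ⇑b := by
          intro a ⟨haS, hax⟩
          rcases hS haS with h | h
          · exact absurd h hax
          · exact h
        have hSeq : S = insert x (S \ {x}) := by
          rw [Set.insert_diff_singleton, Set.insert_eq_self.2 hxS]
        set T : Set (Fin r) := ⇑b ⁻¹' (S \ {x}) with hT
        have hTimg : ⇑b '' T = S \ {x} := Set.image_preimage_eq_of_subset hS0
        have hxnot : x ∉ S \ {x} := fun h => h.2 rfl
        have hρxnot : ρ x ∉ ρ '' (S \ {x}) := by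
          rintro ⟨a, haS, ha⟩
          exact hxnot (hρinj ha ▸ haS)
        have hli0 : LinearIndependent (ZMod 2) ((↑) : ↥(S \ {x}) → (Fin r → ZMod 2)) :=
          b.linearIndependent.to_subtype_range.mono hS0
        have hli0Q : LinearIndependent ℚ ((↑) : ↥(ρ '' (S \ {x})) → (Fin r → ℚ)) := by
          refine (Pi.basisFun ℚ (Fin r)).linearIndependent.to_subtype_range.mono ?_
          rintro - ⟨a, haS, rfl⟩
          obtain ⟨k, rfl⟩ := hS0 haS
          exact ⟨k, (hρb' k).symm⟩
        have himg : ρ '' (⇑b '' T) = ⇑(Pi.basisFun ℚ (Fin r)) '' T := by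
          rw [← Set.image_comp]
          exact Set.image_congr fun k _ => hρb' k
        have key : x ∈ span (ZMod 2) (S \ {x}) ↔ ρ x ∈ span ℚ (ρ '' (S \ {x})) := by
          rw [← hTimg, himg, hmem2, hmemQ]
          simp only [ne_eq, hρ0]
        rw [hSeq, Set.image_insert_eq, linearIndependent_insert hxnot,
          linearIndependent_insert hρxnot]
        constructor
        · rintro ⟨-, h⟩
          exact ⟨hli0Q, fun h' => h (key.2 h')⟩
        · rintro ⟨-, h⟩
          exact ⟨hli0, fun h' => h (key.1 h')⟩
      · -- S ⊆ range b
        have hS' : S ⊆ Set.range ⇑b := by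
          intro a ha
          rcases hS ha with rfl | h
          · by_contra h'
            exact hxS ⟨ha, h'⟩
          · exact h
        refine iff_of_true ?_ ?_
        · exact b.linearIndependent.to_subtype_range.mono hS'
        · refine (Pi.basisFun ℚ (Fin r)).linearIndependent.to_subtype_range.mono ?_
          rintro - ⟨a, haS, rfl⟩
          obtain ⟨k, rfl⟩ := hS' haS
          exact ⟨k, (hρb' k).symm⟩
    constructor
    · intro h
      exact ⟨hρinj.injOn, main.1 h⟩
    · rintro ⟨-, h⟩
      exact main.2 h
  · -- determinant condition
    intro g hgE hg
    have hginj : Function.Injective g := hg.injective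
    by_cases hall : ∀ j, g j ∈ Set.range ⇑b
    · -- permutation case
      set σ : Fin r → Fin r := fun j => Function.invFun ⇑b (g j) with hσdef
      have hσ : ∀ j, b (σ j) = g j := fun j => Function.invFun_eq (hall j)
      have hσinj : Function.Injective σ := by
        intro j j' h
        apply hginj
        rw [← hσ j, ← hσ j', h]
      set σe : Equiv.Perm (Fin r) := Equiv.ofBijective σ (Finite.injective_iff_bijective.1 hσinj)
        with hσe
      have hM : (Matrix.of fun i j => ρ (g j) i) = (σe⁻¹).permMatrix ℚ := by
        ext i j
        rw [Matrix.of_apply, ← hσ j, hρb]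
        simp only [Equiv.Perm.permMatrix, PEquiv.toMatrix_apply, Equiv.toPEquiv_apply,
          Option.mem_def, Option.some.injEq]
        by_cases h : i = σ j
        · have h2 : σe⁻¹ i = j := by
            rw [h]
            exact σe.symm_apply_apply j
          rw [if_pos h, if_pos h2]
        · have h2 : σe⁻¹ i ≠ j := by
            intro h'
            apply h
            rw [← h']
            exact (σe.apply_symm_apply i).symm
          rw [if_neg h, if_neg h2]
      rw [hM, Matrix.det_permutation]
      rcases Int.units_eq_one_or (Equiv.Perm.sign σe⁻¹) with h | h
      · left; rw [h]; simp
      · right; rw [h]; simp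
    · -- one column is x
      push_neg at hall
      obtain ⟨j₀, hj₀⟩ := hall
      have hgj₀ : g j₀ = x := by
        rcases hgE j₀ with h | h
        · exact h
        · exact absurd h hj₀
      have hxb : x ∉ Set.range ⇑b := hgj₀ ▸ hj₀
      have hgj : ∀ j, j ≠ j₀ → g j ∈ Set.range ⇑b := by
        intro j hj
        rcases hgE j with h | h
        · exact absurd (hginj (h.trans hgj₀.symm)) hj
        · exact h
      have himgsub : g '' {j₀}ᶜ ⊆ Set.range ⇑b := by
        rintro - ⟨j, hj, rfl⟩
        exact hgj j hj
      set T : Set (Fin r) := ⇑b ⁻¹' (g '' {j₀}ᶜ) with hT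
      have hTimg : ⇑b '' T = g '' {j₀}ᶜ := Set.image_preimage_eq_of_subset himgsub
      have hxspan : x ∉ span (ZMod 2) (⇑b '' T) := by
        rw [hTimg, ← hgj₀]
        exact hg.notMem_span_image (by simp)
      obtain ⟨s, hs1, hs2⟩ : ∃ s, b.repr x s ≠ 0 ∧ s ∉ T := by
        by_contra h
        push_neg at h
        exact hxspan ((hmem2 x T).2 h)
      have hbs : b s ∉ g '' {j₀}ᶜ := fun h => hs2 h
      set g' : Fin r → (Fin r → ZMod 2) := Function.update g j₀ (b s) with hg'def
      have hg'j₀ : g' j₀ = b s := by rw [hg'def, Function.update_self]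
      have hg'j : ∀ j, j ≠ j₀ → g' j = g j := by
        intro j hj
        rw [hg'def, Function.update_of_ne hj]
      have hg'range : ∀ j, g' j ∈ Set.range ⇑b := by
        intro j
        by_cases h : j = j₀
        · rw [h, hg'j₀]; exact ⟨s, rfl⟩
        · rw [hg'j j h]; exact hgj j h
      have hg'inj : Function.Injective g' := by
        intro a a' h
        by_cases ha : a = j₀ <;> by_cases ha' : a' = j₀
        · rw [ha, ha']
        · rw [ha, hg'j₀, hg'j a' ha'] at h
          exact absurd ⟨a', ha', h.symm⟩ hbs
        · rw [ha', hg'j₀, hg'j a ha] at h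
          exact absurd ⟨a, ha, h⟩ hbs
        · rw [hg'j a ha, hg'j a' ha'] at h
          exact hginj h
      set σ : Fin r → Fin r := fun j => Function.invFun ⇑b (g' j) with hσdef
      have hσ : ∀ j, b (σ j) = g' j := fun j => Function.invFun_eq (hg'range j)
      have hσinj : Function.Injective σ := by
        intro j j' h
        apply hg'inj
        rw [← hσ j, ← hσ j', h]
      set σe : Equiv.Perm (Fin r) := Equiv.ofBijective σ (Finite.injective_iff_bijective.1 hσinj)
        with hσe
      have hσj₀ : σe j₀ = s := by
        apply b.injective
        show b (σ j₀) = b s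
        rw [hσ j₀, hg'j₀]
      have hM : (Matrix.of fun i j => ρ (g j) i)
          = ((1 : Matrix (Fin r) (Fin r) ℚ).updateCol s (ρ x)).submatrix id ⇑σe := by
        ext i j
        rw [Matrix.of_apply, Matrix.submatrix_apply, id_eq, Matrix.updateCol_apply]
        by_cases h : j = j₀
        · subst h
          rw [if_pos hσj₀, hgj₀]
        · have hne : σe j ≠ s := by
            rw [← hσj₀]
            exact fun h' => h (σe.injective h')
          rw [if_neg hne]
          rw [← hg'j j h, ← hσ j, hρb, Matrix.one_apply]
          rfl
      have hval : ρ x s = 1 := by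
        simp only [hρ]
        rw [zmod2_ne_zero hs1, h1v]
        norm_num
      have hdet1 : ((1 : Matrix (Fin r) (Fin r) ℚ).updateCol s (ρ x)).det = 1 := by
        rw [← Matrix.cramer_apply, Matrix.cramer_one]
        simpa using hval
      rw [hM, Matrix.det_permute', hdet1, mul_one]
      rcases Int.units_eq_one_or (Equiv.Perm.sign σe) with h | h
      · left; rw [h]; simp
      · right; rw [h]; simp

lemma regularSpanning_insert_of_li_span {r : ℕ} {A : Set (Fin r → ZMod 2)}
    (hli : LinearIndependent (ZMod 2) ((↑) : ↥A → (Fin r → ZMod 2)))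
    (hsp : Submodule.span (ZMod 2) A = ⊤) {x : Fin r → ZMod 2} (hx : x ≠ 0) :
    RegularSpanning r (insert x A) := by
  classical
  letI : Fintype ↥A := (Set.toFinite A).fintype
  let b₀ : Module.Basis ↥A (ZMod 2) (Fin r → ZMod 2) :=
    Module.Basis.mk hli (by rw [Subtype.range_coe]; exact hsp.ge)
  let e : ↥A ≃ Fin r := b₀.indexEquiv (Pi.basisFun (ZMod 2) (Fin r))
  let b := b₀.reindex e
  have hrange : Set.range ⇑b = A := by
    have : ⇑b = ⇑b₀ ∘ ⇑e.symm := by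
      funext i
      simp [b, Module.Basis.coe_reindex]
    rw [this, Set.range_comp, Set.range_eq_univ.2 e.symm.surjective, Set.image_univ]
    rw [show ⇑b₀ = ((↑) : ↥A → (Fin r → ZMod 2)) from Module.Basis.coe_mk _ _, Subtype.range_coe]
  rw [← hrange]
  exact regularSpanning_insert_basis b x hx

/-- The invariant maintained along the path. -/
def GeoInv {r : ℕ} (A B : Set (Fin r → ZMod 2)) : Prop :=
  LinearIndependent (ZMod 2) ((↑) : ↥(A ∩ B) → (Fin r → ZMod 2)) ∨ A ⊆ B ∨ B ⊆ A

lemma geo_step {r : ℕ} {A B : Set (Fin r → ZMod 2)}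
    (hA : RegularSpanning r A) (hB : RegularSpanning r B)
    (hinv : GeoInv A B) (hne : A ≠ B) :
    ∃ A', RegularSpanning r A' ∧ GeoInv A' B ∧
      ((∃ y ∈ A \ B, A' = A \ {y}) ∨ (∃ x ∈ B \ A, A' = insert x A)) := by
  classical
  by_cases hAB : A ⊆ B
  · obtain ⟨x, hxB, hxA⟩ : ∃ x ∈ B, x ∉ A := by
      by_contra h
      push_neg at h
      exact hne (Set.Subset.antisymm hAB h)
    refine ⟨insert x A, regularSpanning_mono hB (Set.insert_subset hxB hAB) ?_,
      Or.inr (Or.inl (Set.insert_subset hxB hAB)), Or.inr ⟨x, ⟨hxB, hxA⟩, rfl⟩⟩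
    rw [eq_top_iff, ← hA.2.1]
    exact span_mono (subset_insert _ _)
  by_cases hBA : B ⊆ A
  · obtain ⟨y, hyA, hyB⟩ : ∃ y ∈ A, y ∉ B := Set.not_subset.1 hAB
    have hBA' : B ⊆ A \ {y} := fun z hz => ⟨hBA hz, fun e => hyB (e ▸ hz)⟩
    refine ⟨A \ {y}, regularSpanning_mono hA Set.diff_subset ?_,
      Or.inr (Or.inr hBA'), Or.inl ⟨y, ⟨hyA, hyB⟩, rfl⟩⟩
    rw [eq_top_iff, ← hB.2.1]
    exact span_le.2 fun z hz => subset_span (hBA' hz)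
  -- neither inclusion: the intersection must be independent
  have hXli : LinearIndependent (ZMod 2) ((↑) : ↥(A ∩ B) → (Fin r → ZMod 2)) := by
    rcases hinv with h | h | h
    · exact h
    · exact absurd h hAB
    · exact absurd h hBA
  have hXA : A ∩ B ⊆ A := Set.inter_subset_left
  set C := hXli.extend hXA with hC
  have hCA : C ⊆ A := hXli.extend_subset hXA
  have hXC : A ∩ B ⊆ C := hXli.subset_extend hXA
  have hAspanC : A ⊆ ↑(span (ZMod 2) C) := hXli.subset_span_extend hXA
  have hCli : LinearIndependent (ZMod 2) ((↑) : ↥C → (Fin r → ZMod 2)) :=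
    hXli.linearIndependent_extend hXA
  have hCspan : span (ZMod 2) C = ⊤ := by
    rw [eq_top_iff, ← hA.2.1]
    exact span_le.2 hAspanC
  by_cases hCeq : C = A
  · -- A is independent (a basis as a set)
    have hAli : LinearIndependent (ZMod 2) ((↑) : ↥A → (Fin r → ZMod 2)) := hCeq ▸ hCli
    have hXtop : span (ZMod 2) (A ∩ B) ≠ ⊤ := by
      intro htop
      apply hAB
      intro a haA
      by_contra haB
      have haX : a ∉ A ∩ B := fun h => haB h.2
      have h1 : A ∩ B ⊆ A \ {a} := fun z hz => ⟨hz.1, fun e => haX (e ▸ hz)⟩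
      have h2 : a ∈ span (ZMod 2) (A \ {a}) := by
        have : span (ZMod 2) (A \ {a}) = ⊤ := by
          rw [eq_top_iff, ← htop]
          exact span_mono h1
        rw [this]; trivial
      have hA' : insert a (A \ {a}) = A := by
        rw [Set.insert_diff_singleton, Set.insert_eq_self.2 haA]
      have := ((linearIndependent_insert (fun h : a ∈ A \ {a} => h.2 rfl)).1
        (by rw [hA']; exact hAli)).2
      exact this h2
    obtain ⟨x, hxB, hxspan⟩ : ∃ x ∈ B, x ∉ span (ZMod 2) (A ∩ B) := by
      by_contra h
      push_neg at h
      exact hXtop (by rw [eq_top_iff, ← hB.2.1]; exact span_le.2 h)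
    have hxA : x ∉ A := fun h => hxspan (subset_span ⟨h, hxB⟩)
    have hx0 : x ≠ 0 := fun e => hxspan (e ▸ zero_mem _)
    refine ⟨insert x A, regularSpanning_insert_of_li_span hAli hA.2.1 hx0, ?_, 
      Or.inr ⟨x, ⟨hxB, hxA⟩, rfl⟩⟩
    left
    have hset : (insert x A) ∩ B = insert x (A ∩ B) := by
      ext z
      simp only [Set.mem_inter_iff, Set.mem_insert_iff]
      constructor
      · rintro ⟨h1 | h1, h2⟩
        · exact Or.inl h1
        · exact Or.inr ⟨h1, h2⟩
      · rintro (rfl | ⟨h1, h2⟩)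
        · exact ⟨Or.inl rfl, hxB⟩
        · exact ⟨Or.inr h1, h2⟩
    rw [hset]
    exact hXli.insert hxspan
  · -- C ≠ A : delete an element of A \ C
    obtain ⟨y, hyA, hyC⟩ : ∃ y ∈ A, y ∉ C := by
      by_contra h
      push_neg at h
      exact hCeq (Set.Subset.antisymm hCA h)
    have hyB : y ∉ B := fun h => hyC (hXC ⟨hyA, h⟩)
    have hsub : C ⊆ A \ {y} := fun z hz => ⟨hCA hz, fun e => hyC (e ▸ hz)⟩
    have hspan' : span (ZMod 2) (A \ {y}) = ⊤ := by
      rw [eq_top_iff, ← hCspan]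
      exact span_mono hsub
    refine ⟨A \ {y}, regularSpanning_mono hA Set.diff_subset hspan', ?_,
      Or.inl ⟨y, ⟨hyA, hyB⟩, rfl⟩⟩
    left
    have hset : (A \ {y}) ∩ B = A ∩ B := by
      ext z
      simp only [Set.mem_inter_iff, Set.mem_diff, Set.mem_singleton_iff]
      constructor
      · rintro ⟨⟨h1, -⟩, h2⟩
        exact ⟨h1, h2⟩
      · rintro ⟨h1, h2⟩
        exact ⟨⟨h1, fun e => hyB (e ▸ h2)⟩, h2⟩
    rw [hset]
    exact hXli

lemma geodesic_aux {r : ℕ} {B : Set (Fin r → ZMod 2)} (hB : RegularSpanning r B) :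
    ∀ n (A : Set (Fin r → ZMod 2)), RegularSpanning r A → GeoInv A B →
      (A \ B).ncard + (B \ A).ncard = n →
      ∃ γ : ℕ → Set (Fin r → ZMod 2),
        γ 0 = A ∧ γ n = B ∧ (∀ i ≤ n, RegularSpanning r (γ i)) ∧
        ∀ i < n, (symmDiff (γ i) (γ (i + 1))).ncard = 1 := by
  intro n
  induction n with
  | zero =>
    intro A hA _ hcard
    have h1 : (A \ B).ncard = 0 := by omega
    have h2 : (B \ A).ncard = 0 := by omega
    have e1 : A \ B = ∅ := (Set.ncard_eq_zero (Set.toFinite _)).1 h1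
    have e2 : B \ A = ∅ := (Set.ncard_eq_zero (Set.toFinite _)).1 h2
    have hAB : A = B := Set.Subset.antisymm (Set.diff_eq_empty.1 e1) (Set.diff_eq_empty.1 e2)
    exact ⟨fun _ => A, rfl, hAB, fun i _ => hA, fun i h => absurd h (Nat.not_lt_zero i)⟩
  | succ n ih =>
    intro A hA hinv hcard
    have hne : A ≠ B := by
      rintro rfl
      simp at hcard
    obtain ⟨A', hA', hinv', hmove⟩ := geo_step hA hB hinv hne
    have hkey : (A' \ B).ncard + (B \ A').ncard = n ∧ (symmDiff A A').ncard = 1 := by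
      rcases hmove with ⟨y, ⟨hyA, hyB⟩, rfl⟩ | ⟨x, ⟨hxB, hxA⟩, rfl⟩
      · have e1 : (A \ {y}) \ B = (A \ B) \ {y} := by
          ext z
          simp only [Set.mem_diff, Set.mem_singleton_iff]
          tauto
        have e2 : B \ (A \ {y}) = B \ A := by
          ext z
          simp only [Set.mem_diff, Set.mem_singleton_iff]
          constructor
          · rintro ⟨hz, h⟩
            refine ⟨hz, fun hzA => h ⟨hzA, ?_⟩⟩
            rintro rfl
            exact hyB hz
          · rintro ⟨hz, h⟩
            exact ⟨hz, fun h' => h h'.1⟩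
        have e3 : symmDiff A (A \ {y}) = {y} := by
          rw [symmDiff_def]
          ext z
          simp only [Set.sup_eq_union, Set.mem_union, Set.mem_diff, Set.mem_singleton_iff]
          constructor
          · rintro (⟨hz, h⟩ | ⟨⟨h1, h2⟩, h3⟩)
            · by_contra h'
              exact h ⟨hz, h'⟩
            · exact absurd h1 h3
          · rintro rfl
            exact Or.inl ⟨hyA, fun h => h.2 rfl⟩
        have hmem : y ∈ A \ B := ⟨hyA, hyB⟩
        have := Set.ncard_diff_singleton_add_one hmem (Set.toFinite _)
        rw [e1, e2, e3]
        constructor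
        · omega
        · exact Set.ncard_singleton y
      · have e1 : (insert x A) \ B = A \ B := by
          ext z
          simp only [Set.mem_diff, Set.mem_insert_iff]
          constructor
          · rintro ⟨rfl | hz, h⟩
            · exact absurd hxB h
            · exact ⟨hz, h⟩
          · rintro ⟨hz, h⟩
            exact ⟨Or.inr hz, h⟩
        have e2 : B \ (insert x A) = (B \ A) \ {x} := by
          ext z
          simp only [Set.mem_diff, Set.mem_insert_iff, Set.mem_singleton_iff]
          tauto
        have e3 : symmDiff A (insert x A) = {x} := by
          rw [symmDiff_def]
          ext z
          simp only [Set.sup_eq_union, Set.mem_union, Set.mem_diff, Set.mem_insert_iff,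
            Set.mem_singleton_iff]
          constructor
          · rintro (⟨hz, h⟩ | ⟨rfl | h1, h2⟩)
            · exact absurd (Or.inr hz) h
            · rfl
            · exact absurd h1 h2
          · rintro rfl
            exact Or.inr ⟨Or.inl rfl, hxA⟩
        have hmem : x ∈ B \ A := ⟨hxB, hxA⟩
        have := Set.ncard_diff_singleton_add_one hmem (Set.toFinite _)
        rw [e1, e2, e3]
        constructor
        · omega
        · exact Set.ncard_singleton x
    obtain ⟨γ', h0, hn, hRS, hstep⟩ := ih A' hA' hinv' hkey.1
    refine ⟨fun i => Nat.rec A (fun k _ => γ' k) i, rfl, hn, ?_, ?_⟩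
    · intro i hi
      cases i with
      | zero => exact hA
      | succ k => exact hRS k (by omega)
    · intro i hi
      cases i with
      | zero =>
        show (symmDiff A (γ' 0)).ncard = 1
        rw [h0]
        exact hkey.2
      | succ k => exact hstep k (by omega)


end AuxGeodesic

/-- **Existence of regular geodesics**: if `E₁, E₂ ∈ IR(r, 𝔽₂)` and `E₁ ∩ E₂` is linearly
independent over `𝔽₂`, then setting `d = |E₁ \ E₂| + |E₂ \ E₁|` there is a path
`γ₀ = E₁, γ₁, …, γ_d = E₂` through `IR(r, 𝔽₂)` in which consecutive sets have symmetric
difference of exactly one element. -/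
theorem exists_regular_geodesic (r : ℕ) (hr : 1 ≤ r) (E₁ E₂ : Set (Fin r → ZMod 2))
    (h₁ : RegularSpanning r E₁) (h₂ : RegularSpanning r E₂)
    (hX : LinearIndependent (ZMod 2) ((↑) : ↥(E₁ ∩ E₂) → (Fin r → ZMod 2))) :
    ∃ γ : ℕ → Set (Fin r → ZMod 2),
      γ 0 = E₁ ∧ γ ((E₁ \ E₂).ncard + (E₂ \ E₁).ncard) = E₂ ∧
      (∀ i ≤ (E₁ \ E₂).ncard + (E₂ \ E₁).ncard, RegularSpanning r (γ i)) ∧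
      ∀ i < (E₁ \ E₂).ncard + (E₂ \ E₁).ncard,
        (symmDiff (γ i) (γ (i + 1))).ncard = 1 :=
  geodesic_aux h₂ _ E₁ h₁ (Or.inl hX) rfl
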